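/- Let f ∈ L^∞_{−β}(ℝⁿ) (i.e. ess sup Λ(x)^{−β}|f(x)| < ∞), g ∈ L¹_β(ℝⁿ) and G ∈ L¹_β(ℝⁿ). Then the convolutions are absolutely convergent and associativity holds: f * (g * G) = (f * g) * G almost everywhere. -/

import Mathlib

open MeasureTheory

/-- for `f ∈ L^∞_{−β}`, `g, G ∈ L¹_β` the convolutions converge absolutely and
`f * (g * G) = (f * g) * G`. -/
theorem stmt5 (n : ℕ) (β : ℝ) (hβ : 0 ≤ β)
    (Λ : EuclideanSpace ℝ (Fin n) → ℝ)
    (hΛ : ∀ x, Λ x = (1 + ‖x‖ ^ 2) ^ ((1 : ℝ) / 2))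
    (f g G : EuclideanSpace ℝ (Fin n) → ℂ)
    (hf : AEStronglyMeasurable f (volume : Measure (EuclideanSpace ℝ (Fin n))))
    (hfβ : ∃ C : ℝ, ∀ᵐ x ∂(volume : Measure (EuclideanSpace ℝ (Fin n))), ‖f x‖ ≤ C * Λ x ^ β)
    (hg : Integrable g) (hgβ : Integrable (fun x => ‖g x‖ * Λ x ^ β))
    (hG : Integrable G) (hGβ : Integrable (fun x => ‖G x‖ * Λ x ^ β)) :
    (∀ x : EuclideanSpace ℝ (Fin n),
      Integrable (fun p : EuclideanSpace ℝ (Fin n) × EuclideanSpace ℝ (Fin n) =>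
        f (x - p.1) * (g (p.1 - p.2) * G p.2))) ∧
    ∀ x : EuclideanSpace ℝ (Fin n),
      ∫ y, f (x - y) * ∫ z, g (y - z) * G z = ∫ z, (∫ y, f (x - y) * g (y - z)) * G z := by
  obtain ⟨C, hC⟩ := hfβ
  have hΛpos : ∀ x : EuclideanSpace ℝ (Fin n), 0 < Λ x := fun x => by rw [hΛ]; positivity
  -- Peetre's inequality
  have hfour : ((4:ℝ)) ^ ((1:ℝ)/2) = 2 := by
    rw [show (4:ℝ) = 2 ^ (2:ℕ) by norm_num, ← Real.rpow_natCast 2 2,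
      ← Real.rpow_mul (by norm_num)]
    norm_num
  have peetre : ∀ u v : EuclideanSpace ℝ (Fin n), Λ (u + v) ≤ 2 * Λ u * Λ v := by
    intro u v
    rw [hΛ, hΛ, hΛ]
    have h2 : ‖u + v‖ ^ 2 ≤ (‖u‖ + ‖v‖) ^ 2 :=
      pow_le_pow_left₀ (norm_nonneg _) (norm_add_le u v) 2
    have h : 1 + ‖u + v‖ ^ 2 ≤ 4 * ((1 + ‖u‖ ^ 2) * (1 + ‖v‖ ^ 2)) := by
      nlinarith [sq_nonneg (‖u‖ - ‖v‖), sq_nonneg (‖u‖ * ‖v‖), norm_nonneg u, norm_nonneg v]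
    calc (1 + ‖u + v‖ ^ 2) ^ ((1:ℝ)/2)
        ≤ (4 * ((1 + ‖u‖ ^ 2) * (1 + ‖v‖ ^ 2))) ^ ((1:ℝ)/2) :=
          Real.rpow_le_rpow (by positivity) h (by norm_num)
      _ = 2 * (1 + ‖u‖ ^ 2) ^ ((1:ℝ)/2) * (1 + ‖v‖ ^ 2) ^ ((1:ℝ)/2) := by
          rw [Real.mul_rpow (by norm_num) (by positivity),
            Real.mul_rpow (by positivity) (by positivity), hfour]
          ring
  have hΛneg : ∀ w : EuclideanSpace ℝ (Fin n), Λ (-w) = Λ w := fun w => by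
    rw [hΛ, hΛ, norm_neg]
  have hΛrev : ∀ w w' : EuclideanSpace ℝ (Fin n), Λ (w - w') = Λ (w' - w) := fun w w' => by
    rw [hΛ, hΛ, norm_sub_rev]
  -- iterated Peetre
  have key : ∀ x y z : EuclideanSpace ℝ (Fin n),
      Λ (x - y) ≤ (4 * Λ x) * (Λ (y - z) * Λ z) := by
    intro x y z
    have e1 : Λ (x - y) = Λ (x + ((z - y) + -z)) := by congr 1; abel
    calc Λ (x - y) = Λ (x + ((z - y) + -z)) := e1
      _ ≤ 2 * Λ x * Λ ((z - y) + -z) := peetre _ _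
      _ ≤ 2 * Λ x * (2 * Λ (z - y) * Λ (-z)) :=
          mul_le_mul_of_nonneg_left (peetre _ _)
            (mul_nonneg (by norm_num) (hΛpos x).le)
      _ = (4 * Λ x) * (Λ (y - z) * Λ z) := by rw [hΛneg, hΛrev z y]; ring
  have keyβ : ∀ x y z : EuclideanSpace ℝ (Fin n),
      Λ (x - y) ^ β ≤ ((4:ℝ) ^ β * Λ x ^ β) * (Λ (y - z) ^ β * Λ z ^ β) := by
    intro x y z
    calc Λ (x - y) ^ β ≤ ((4 * Λ x) * (Λ (y - z) * Λ z)) ^ β :=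
          Real.rpow_le_rpow (hΛpos _).le (key x y z) hβ
      _ = ((4:ℝ) ^ β * Λ x ^ β) * (Λ (y - z) ^ β * Λ z ^ β) := by
          rw [Real.mul_rpow (mul_nonneg (by norm_num) (hΛpos x).le)
              (mul_nonneg (hΛpos _).le (hΛpos _).le),
            Real.mul_rpow (by norm_num) (hΛpos x).le,
            Real.mul_rpow (hΛpos _).le (hΛpos _).le]
  set C' := max C 0 with hC'def
  have hC'0 : (0:ℝ) ≤ C' := le_max_right _ _
  have hC2 : ∀ᵐ x ∂(volume : Measure (EuclideanSpace ℝ (Fin n))), ‖f x‖ ≤ C' * Λ x ^ β := by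
    filter_upwards [hC] with x hx
    exact hx.trans (mul_le_mul_of_nonneg_right (le_max_left _ _)
      (Real.rpow_nonneg (hΛpos x).le β))
  -- majorant integrable on the product
  have hmaj : Integrable (fun p : EuclideanSpace ℝ (Fin n) × EuclideanSpace ℝ (Fin n) =>
      (‖G p.2‖ * Λ p.2 ^ β) * (‖g (p.1 - p.2)‖ * Λ (p.1 - p.2) ^ β))
      ((volume : Measure (EuclideanSpace ℝ (Fin n))).prod volume) := by
    simpa using hGβ.convolution_integrand (ContinuousLinearMap.mul ℝ ℝ) hgβ
  have hInt : ∀ x : EuclideanSpace ℝ (Fin n),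
      Integrable (fun p : EuclideanSpace ℝ (Fin n) × EuclideanSpace ℝ (Fin n) =>
        f (x - p.1) * (g (p.1 - p.2) * G p.2)) := by
    intro x
    have hsub := Measure.measurePreserving_sub_left
      (volume : Measure (EuclideanSpace ℝ (Fin n))) x
    have hfx : AEStronglyMeasurable (fun y : EuclideanSpace ℝ (Fin n) => f (x - y)) volume :=
      hf.comp_quasiMeasurePreserving hsub.quasiMeasurePreserving
    have hmeas : AEStronglyMeasurable
        (fun p : EuclideanSpace ℝ (Fin n) × EuclideanSpace ℝ (Fin n) =>
          f (x - p.1) * (g (p.1 - p.2) * G p.2)) (Measure.prod volume volume) := by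
      refine AEStronglyMeasurable.mul ?_ (AEStronglyMeasurable.mul ?_ ?_)
      · exact hfx.comp_fst
      · exact hg.aestronglyMeasurable.comp_quasiMeasurePreserving
          (quasiMeasurePreserving_sub_of_right_invariant volume volume)
      · exact hG.aestronglyMeasurable.comp_snd
    have hfa : ∀ᵐ y ∂(volume : Measure (EuclideanSpace ℝ (Fin n))),
        ‖f (x - y)‖ ≤ C' * Λ (x - y) ^ β :=
      (hsub.quasiMeasurePreserving.tendsto_ae).eventually hC2
    have hfap : ∀ᵐ p : EuclideanSpace ℝ (Fin n) × EuclideanSpace ℝ (Fin n)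
        ∂(Measure.prod volume volume), ‖f (x - p.1)‖ ≤ C' * Λ (x - p.1) ^ β :=
      Measure.quasiMeasurePreserving_fst.tendsto_ae.eventually hfa
    refine Integrable.mono' (hmaj.const_mul (C' * ((4:ℝ) ^ β * Λ x ^ β))) hmeas ?_
    filter_upwards [hfap] with p hp
    have hgn : (0:ℝ) ≤ ‖g (p.1 - p.2)‖ * ‖G p.2‖ := by positivity
    calc ‖f (x - p.1) * (g (p.1 - p.2) * G p.2)‖
        = ‖f (x - p.1)‖ * (‖g (p.1 - p.2)‖ * ‖G p.2‖) := by rw [norm_mul, norm_mul]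
      _ ≤ (C' * Λ (x - p.1) ^ β) * (‖g (p.1 - p.2)‖ * ‖G p.2‖) :=
          mul_le_mul_of_nonneg_right hp hgn
      _ ≤ (C' * (((4:ℝ) ^ β * Λ x ^ β) * (Λ (p.1 - p.2) ^ β * Λ p.2 ^ β))) *
            (‖g (p.1 - p.2)‖ * ‖G p.2‖) :=
          mul_le_mul_of_nonneg_right
            (mul_le_mul_of_nonneg_left (keyβ x p.1 p.2) hC'0) hgn
      _ = (C' * ((4:ℝ) ^ β * Λ x ^ β)) *
            ((‖G p.2‖ * Λ p.2 ^ β) * (‖g (p.1 - p.2)‖ * Λ (p.1 - p.2) ^ β)) := by ring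
  refine ⟨hInt, fun x => ?_⟩
  calc ∫ y, f (x - y) * ∫ z, g (y - z) * G z
      = ∫ y, ∫ z, f (x - y) * (g (y - z) * G z) := by
        simp_rw [integral_const_mul]
    _ = ∫ z, ∫ y, f (x - y) * (g (y - z) * G z) := integral_integral_swap (hInt x)
    _ = ∫ z, (∫ y, f (x - y) * g (y - z)) * G z := by
        simp_rw [← mul_assoc, integral_mul_const]
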